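/- A nonempty palindrome w is removed from the set of distinct palindromic substrings when the leftmost character is deleted—i.e., w is a palindromic substring of T = S[i-1..j-1] but not of S[i..j-1]—if and only if w is unique in T and w equals the longest palindromic prefix of T. -/
import Mathlib

def window {α : Type*} (S : List α) (i j : ℕ) : List α :=
  (S.drop i).take (j + 1 - i)

def occCount {α : Type*} [DecidableEq α] (S w : List α) : ℕ :=
  ((List.range (S.length + 1)).filter (fun i => decide (w <+: S.drop i))).length

def IsLpp {α : Type*} (T p : List α) : Prop :=
  p <+: T ∧ p.reverse = p ∧ ∀ q, q <+: T → q.reverse = q → q.length ≤ p.length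

lemma infix_iff_drop {α : Type*} (w T : List α) : w <:+: T ↔ ∃ p, w <+: T.drop p := by
  rw [List.infix_iff_prefix_suffix]
  constructor
  · rintro ⟨t, hp, hs⟩
    exact ⟨T.length - t.length, by rw [← List.suffix_iff_eq_drop.mp hs]; exact hp⟩
  · rintro ⟨p, hp⟩; exact ⟨T.drop p, hp, List.drop_suffix p T⟩

lemma infix_tail_of_drop {α : Type*} {w T : List α} {p : ℕ} (hp : 1 ≤ p)
    (h : w <+: T.drop p) : w <:+: T.drop 1 := by
  rw [infix_iff_drop]
  refine ⟨p - 1, ?_⟩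
  rwa [List.drop_drop, Nat.add_sub_cancel' hp]

lemma main_lemma {α : Type*} [DecidableEq α] (T w : List α)
    (hw : w ≠ []) (hwpal : w.reverse = w) :
    (w <:+: T ∧ ¬ w <:+: T.drop 1) ↔ (occCount T w = 1 ∧ IsLpp T w) := by
  constructor
  · rintro ⟨h1, h2⟩
    have hpos : ∀ p, w <+: T.drop p → p = 0 := by
      intro p hp
      by_contra hne
      exact h2 (infix_tail_of_drop (Nat.one_le_iff_ne_zero.mpr hne) hp)
    obtain ⟨p, hp⟩ := (infix_iff_drop w T).mp h1
    have hpref : w <+: T := by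
      have := hpos p hp; subst this; simpa using hp
    have hfilter : (List.range (T.length + 1)).filter
        (fun i => decide (w <+: T.drop i)) = [0] := by
      rw [List.range_succ_eq_map, List.filter_cons]
      simp only [List.drop_zero, hpref, decide_true, if_true]
      congr 1
      rw [List.filter_eq_nil_iff]
      intro a ha
      simp only [List.mem_map] at ha
      obtain ⟨b, _, rfl⟩ := ha
      simp only [decide_eq_true_eq]
      intro hcon
      exact Nat.succ_ne_zero b (hpos _ hcon)
    constructor
    · unfold occCount; rw [hfilter]; rfl
    · refine ⟨hpref, hwpal, ?_⟩
      intro q hq hqpal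
      by_contra hlen
      push_neg at hlen
      have hwq : w <+: q := List.prefix_of_prefix_length_le hpref hq hlen.le
      have hws : w <:+ q := by
        rw [← List.reverse_prefix, hwpal, hqpal]; exact hwq
      obtain ⟨u, rfl⟩ := hws
      obtain ⟨v, rfl⟩ := hq
      have hdrop : w <+: ((u ++ w) ++ v).drop u.length := by
        rw [List.append_assoc, List.drop_left]
        exact ⟨v, rfl⟩
      have hu : 1 ≤ u.length := by
        by_contra hu
        simp only [not_le, Nat.lt_one_iff, List.length_eq_zero_iff] at hu
        subst hu; simp at hlen
      exact h2 (infix_tail_of_drop hu hdrop)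
  · rintro ⟨h1, hpref, _, _⟩
    refine ⟨hpref.isInfix, ?_⟩
    intro hcon
    obtain ⟨p, hp⟩ := (infix_iff_drop w _).mp hcon
    rw [List.drop_drop] at hp
    have hlt : 1 + p < T.length + 1 := by
      have : T.drop (1 + p) ≠ [] := by
        intro h; rw [h, List.prefix_nil] at hp; exact hw hp
      rw [ne_eq, List.drop_eq_nil_iff, not_le] at this
      omega
    unfold occCount at h1
    obtain ⟨a, ha⟩ := List.length_eq_one_iff.mp h1
    have h0 : (0 : ℕ) ∈ [a] := by
      rw [← ha, List.mem_filter]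
      simp [hpref]
    have h1p : 1 + p ∈ [a] := by
      rw [← ha, List.mem_filter]
      simp [hp, List.mem_range.mpr hlt]
    simp only [List.mem_singleton] at h0 h1p
    omega

theorem removed_palindrome_iff {α : Type*} [DecidableEq α]
    (S w : List α) (i j : ℕ) (hi : 1 ≤ i) (hij : i ≤ j) (hj : j ≤ S.length)
    (hw : w ≠ []) (hwpal : w.reverse = w) :
    (w <:+: window S (i-1) (j-1) ∧ ¬ w <:+: window S i (j-1)) ↔
    (occCount (window S (i-1) (j-1)) w = 1 ∧ IsLpp (window S (i-1) (j-1)) w) := by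
  have hwin : window S i (j-1) = (window S (i-1) (j-1)).drop 1 := by
    unfold window
    rw [List.drop_take, List.drop_drop]
    have e1 : i - 1 + 1 = i := by omega
    have e2 : j - 1 + 1 - (i - 1) - 1 = j - 1 + 1 - i := by omega
    rw [e1, e2]
  rw [hwin]
  exact main_lemma _ w hw hwpal
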